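/- If G is a Steinhaus topological group, then every group homomorphism from G into a separable topological group H is continuous. -/

import Mathlib

open Pointwise Set

private lemma sym_nhds_pow {H : Type*} [Group H] [TopologicalSpace H] [IsTopologicalGroup H]
    (n : ℕ) : ∀ U : Set H, U ∈ nhds 1 →
    ∃ V : Set H, IsOpen V ∧ (1 : H) ∈ V ∧ V⁻¹ = V ∧ V ^ (2 ^ n) ⊆ U := by
  induction n with
  | zero =>
    intro U hU
    refine ⟨interior U ∩ (interior U)⁻¹, isOpen_interior.inter isOpen_interior.inv,
      ⟨mem_interior_iff_mem_nhds.2 hU, by simp [mem_interior_iff_mem_nhds.2 hU]⟩, ?_, ?_⟩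
    · simp [Set.inter_comm]
    · simpa using (Set.inter_subset_left).trans interior_subset
  | succ n ih =>
    intro U hU
    obtain ⟨V₀, hV₀open, hV₀mem, hV₀⟩ := exists_open_nhds_one_mul_subset hU
    obtain ⟨V, hVopen, hVmem, hVsym, hVpow⟩ := ih V₀ (hV₀open.mem_nhds hV₀mem)
    refine ⟨V, hVopen, hVmem, hVsym, ?_⟩
    have : (2 : ℕ) ^ (n + 1) = 2 ^ n + 2 ^ n := by ring
    rw [this, pow_add]
    exact (Set.mul_subset_mul hVpow hVpow).trans hV₀

private lemma preimage_pow_subset {G H : Type*} [Group G] [Group H] (π : G →* H) (V : Set H) :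
    ∀ n : ℕ, (π ⁻¹' V) ^ n ⊆ π ⁻¹' (V ^ n) := by
  intro n
  induction n with
  | zero => intro x hx; simp only [pow_zero, Set.mem_one] at hx ⊢; simp [hx]
  | succ n ih =>
    rw [pow_succ, pow_succ]
    rintro x ⟨a, ha, b, hb, rfl⟩
    show π (a * b) ∈ V ^ n * V
    rw [map_mul]
    exact Set.mul_mem_mul (ih ha) hb

/-- If `G` is a Steinhaus topological group (there is `k ≥ 1` such that `W^k` has
nonempty interior for every symmetric countably syndetic `W ⊆ G`), then every
homomorphism from `G` into a separable topological group is continuous. -/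
theorem steinhaus_implies_automatic_continuity (G : Type*) [Group G] [TopologicalSpace G]
    [IsTopologicalGroup G]
    (hSteinhaus : ∃ k : ℕ, 1 ≤ k ∧ ∀ W : Set G, W⁻¹ = W →
      (∃ c : ℕ → G, (⋃ n, c n • W) = Set.univ) → (interior (W ^ k)).Nonempty)
    (H : Type*) [Group H] [TopologicalSpace H] [IsTopologicalGroup H]
    [TopologicalSpace.SeparableSpace H] (π : G →* H) :
    Continuous π := by
  obtain ⟨k, hk1, hSt⟩ := hSteinhaus
  apply continuous_of_continuousAt_one π
  rw [ContinuousAt, map_one, Filter.tendsto_def]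
  intro U hU
  -- choose a symmetric open neighborhood V of 1 with V ^ (4k) ⊆ U
  obtain ⟨m, hm⟩ : ∃ m : ℕ, 4 * k ≤ 2 ^ m := ⟨4 * k, Nat.lt_two_pow_self.le⟩
  obtain ⟨V, hVopen, hVmem, hVsym, hVpow⟩ := sym_nhds_pow m U hU
  have hV4k : V ^ (4 * k) ⊆ U := (Set.pow_subset_pow_right hVmem hm).trans hVpow
  -- the symmetric set W
  set W : Set G := π ⁻¹' (V ^ 2) with hW
  have hV2sym : (V ^ 2)⁻¹ = V ^ 2 := by rw [← inv_pow, hVsym]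
  have hWsym : W⁻¹ = W := by
    ext x
    simp only [hW, Set.mem_inv, Set.mem_preimage, map_inv]
    rw [← Set.mem_inv, hV2sym]
  -- W is countably syndetic
  have hne : Nonempty H := ⟨1⟩
  set u : ℕ → H := TopologicalSpace.denseSeq H with hu
  have hud : DenseRange u := TopologicalSpace.denseRange_denseSeq H
  have hsynd : ∃ c : ℕ → G, (⋃ n, c n • W) = Set.univ := by
    classical
    refine ⟨fun n => if h : ∃ g : G, π g ∈ u n • V then h.choose else 1, ?_⟩
    rw [Set.eq_univ_iff_forall]
    intro g
    obtain ⟨n, hn⟩ := hud.exists_mem_open (hVopen.smul (π g)) ⟨_, Set.smul_mem_smul_set hVmem⟩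
    obtain ⟨v, hv, hveq⟩ := hn
    have hgmem : π g ∈ u n • V := by
      refine ⟨v⁻¹, by rw [← hVsym]; exact Set.inv_mem_inv.2 hv, ?_⟩
      simp [← hveq, mul_assoc]
    have hex : ∃ g' : G, π g' ∈ u n • V := ⟨g, hgmem⟩
    refine Set.mem_iUnion.2 ⟨n, ?_⟩
    simp only [hex, dif_pos]
    obtain ⟨v', hv', hv'eq⟩ := hex.choose_spec
    refine ⟨hex.choose⁻¹ * g, ?_, by simp [smul_eq_mul]⟩
    show π (hex.choose⁻¹ * g) ∈ V ^ 2
    have : π (hex.choose⁻¹ * g) = v'⁻¹ * (u n)⁻¹ * (u n * v⁻¹) := by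
      obtain ⟨w, hwv, hweq⟩ := hgmem
      have h1 : π hex.choose = u n * v' := hv'eq.symm
      have h2 : π g = u n * v⁻¹ := by simp [← hveq, mul_assoc]
      rw [map_mul, map_inv, h1, h2]
      group
    rw [this, pow_two]
    have hv'inv : v'⁻¹ ∈ V := by rw [← hVsym]; exact Set.inv_mem_inv.2 hv'
    have hvinv : v⁻¹ ∈ V := by rw [← hVsym]; exact Set.inv_mem_inv.2 hv
    have : v'⁻¹ * (u n)⁻¹ * (u n * v⁻¹) = v'⁻¹ * v⁻¹ := by group
    rw [this]
    exact Set.mul_mem_mul hv'inv hvinv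
  -- apply Steinhaus
  obtain ⟨g₀, hg₀⟩ := hSt W hWsym hsynd
  -- W ^ k ⊆ π ⁻¹' (V ^ (2 * k))
  have hWk : W ^ k ⊆ π ⁻¹' (V ^ (2 * k)) := by
    rw [hW]
    refine (_root_.preimage_pow_subset π (V ^ 2) k).trans ?_
    rw [← pow_mul]
  have hg₀mem : π g₀ ∈ V ^ (2 * k) := hWk (interior_subset hg₀)
  -- translate interior to a neighborhood of 1
  have hsub : g₀⁻¹ • interior (W ^ k) ⊆ π ⁻¹' U := by
    rintro x ⟨y, hy, rfl⟩
    have hy' : π y ∈ V ^ (2 * k) := hWk (interior_subset hy)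
    have hg₀inv : (π g₀)⁻¹ ∈ V ^ (2 * k) := by
      have hpinv : (V ^ (2 * k))⁻¹ = V ^ (2 * k) := by rw [← inv_pow, hVsym]
      have h := Set.inv_mem_inv.2 hg₀mem
      rwa [hpinv] at h
    have : π (g₀⁻¹ • y) ∈ V ^ (2 * k) * V ^ (2 * k) := by
      rw [smul_eq_mul, map_mul, map_inv]
      exact Set.mul_mem_mul hg₀inv hy'
    rw [← pow_add] at this
    have h4 : 2 * k + 2 * k = 4 * k := by ring
    rw [h4] at this
    exact hV4k this
  refine Filter.mem_of_superset ?_ hsub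
  refine (isOpen_interior.smul g₀⁻¹).mem_nhds ?_
  exact ⟨g₀, hg₀, by simp⟩
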